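/- Let a : ℝⁿ → (n×n real matrices) be smooth with a(x) symmetric and invertible for every x, γⁱ_jk(x) = ½ Σ_l (a(x)⁻¹)^{il} ( ∂a_lj/∂xᵏ + ∂a_lk/∂xʲ − ∂a_jk/∂xˡ ) the Christoffel symbols, Gⁱ(x,y) = ½ Σ_{j,k} γⁱ_jk(x) yʲ yᵏ, and N^j_i = ∂Gʲ/∂yⁱ = Σ_k γʲ_ik yᵏ. Let φ : ℝⁿ → ℝ be smooth and set L(x,y) = Σ_{i,j} a_ij(x) yⁱ yʲ + Σ_j ∂φ/∂xʲ(x) yʲ. Then for every i and every (x,y), the horizontal derivative satisfies δL/δxⁱ(x,y) = ∂L/∂xⁱ(x,y) − Σ_j N^j_i(x,y) ∂L/∂yʲ(x,y) = Σ_j ( ∂²φ/∂xⁱ∂xʲ(x) − Σ_k γᵏ_ij(x) ∂φ/∂xᵏ(x) ) yʲ. -/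

import Mathlib

open scoped ContDiff

/-- The tangent bundle of `ℝⁿ`, identified with `ℝⁿ × ℝⁿ` (base coordinates `x`,
fibre coordinates `y`). -/
abbrev TM (n : ℕ) := (Fin n → ℝ) × (Fin n → ℝ)

/-- Partial derivative of `F` in the `i`-th base coordinate `xⁱ`. -/
noncomputable def pdx {n : ℕ} (F : TM n → ℝ) (i : Fin n) (p : TM n) : ℝ :=
  fderiv ℝ F p (Pi.single i 1, 0)

/-- Partial derivative of `F` in the `i`-th fibre coordinate `yⁱ`. -/
noncomputable def pdy {n : ℕ} (F : TM n → ℝ) (i : Fin n) (p : TM n) : ℝ :=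
  fderiv ℝ F p (0, Pi.single i 1)

/-- Partial derivative of a function on the base `ℝⁿ` in the `i`-th coordinate. -/
noncomputable def pdb {n : ℕ} (f : (Fin n → ℝ) → ℝ) (i : Fin n) (x : Fin n → ℝ) : ℝ :=
  fderiv ℝ f x (Pi.single i 1)

/-- Christoffel symbols `γⁱ_jk = ½ Σ_l (a⁻¹)^{il} (∂a_lj/∂xᵏ + ∂a_lk/∂xʲ − ∂a_jk/∂xˡ)`. -/
noncomputable def christoffel {n : ℕ} (a : (Fin n → ℝ) → Matrix (Fin n) (Fin n) ℝ)
    (i j k : Fin n) (x : Fin n → ℝ) : ℝ :=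
  (1 / 2) * ∑ l, (a x)⁻¹ i l *
    (pdb (fun z => a z l j) k x + pdb (fun z => a z l k) j x - pdb (fun z => a z j k) l x)

/-- Canonical semispray coefficients `Gⁱ(x,y) = ½ Σ_{j,k} γⁱ_jk(x) yʲ yᵏ` of the
Riemannian quadratic Lagrangian. -/
noncomputable def Gquad {n : ℕ} (a : (Fin n → ℝ) → Matrix (Fin n) (Fin n) ℝ)
    (i : Fin n) (p : TM n) : ℝ :=
  (1 / 2) * ∑ j, ∑ k, christoffel a i j k p.1 * p.2 j * p.2 k

/-! ### Auxiliary lemmas -/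

lemma diff_det {n : ℕ} {m : Type*} [Fintype m] [DecidableEq m]
    (b : (Fin n → ℝ) → Matrix m m ℝ)
    (hb : ∀ i j, Differentiable ℝ (fun x => b x i j)) :
    Differentiable ℝ (fun x => (b x).det) := by
  simp only [Matrix.det_apply']
  refine Differentiable.fun_sum fun σ _ => Differentiable.const_mul ?_ _
  intro x
  exact HasFDerivAt.differentiableAt
    (HasFDerivAt.finset_prod (fun i _ => (hb (σ i) i x).hasFDerivAt))

lemma diff_inv_entry {n : ℕ} (a : (Fin n → ℝ) → Matrix (Fin n) (Fin n) ℝ)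
    (ha : ∀ i j : Fin n, Differentiable ℝ (fun x => a x i j))
    (hinv : ∀ x, IsUnit (a x)) (i l : Fin n) :
    Differentiable ℝ (fun x => (a x)⁻¹ i l) := by
  have hdet : Differentiable ℝ (fun x => (a x).det) := diff_det a ha
  have hdet0 : ∀ x, (a x).det ≠ 0 := fun x =>
    ((Matrix.isUnit_iff_isUnit_det _).mp (hinv x)).ne_zero
  have hadj : Differentiable ℝ (fun x => (a x).adjugate i l) := by
    simp only [Matrix.adjugate_apply]
    refine diff_det _ (fun p q => ?_)
    simp only [Matrix.updateRow_apply]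
    by_cases h : p = l
    · simp only [h, if_true]
      exact differentiable_const _
    · simp only [h, if_false]
      exact ha p q
  have : (fun x => (a x)⁻¹ i l) = fun x => ((a x).det)⁻¹ * (a x).adjugate i l := by
    funext x
    rw [Matrix.inv_def]
    simp [Ring.inverse_eq_inv']
  rw [this]
  exact (hdet.inv hdet0).mul hadj

lemma contDiff_pdb {n : ℕ} (f : (Fin n → ℝ) → ℝ) (hf : ContDiff ℝ ∞ f) (i : Fin n) :
    ContDiff ℝ ∞ (pdb f i) := by
  have h1 : ContDiff ℝ ∞ (fderiv ℝ f) := hf.fderiv_right (by simp)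
  exact (ContinuousLinearMap.apply ℝ ℝ (Pi.single i 1)).contDiff.comp h1

lemma fderiv_quadlin {n : ℕ} (c : Fin n → Fin n → (Fin n → ℝ) → ℝ)
    (d : Fin n → (Fin n → ℝ) → ℝ)
    (hc : ∀ j k, Differentiable ℝ (c j k)) (hd : ∀ j, Differentiable ℝ (d j))
    (p v : TM n) :
    fderiv ℝ (fun q : TM n =>
        (∑ j, ∑ k, c j k q.1 * q.2 j * q.2 k) + ∑ j, d j q.1 * q.2 j) p v
      = (∑ j, ∑ k, (fderiv ℝ (c j k) p.1 v.1 * p.2 j * p.2 k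
          + c j k p.1 * v.2 j * p.2 k + c j k p.1 * p.2 j * v.2 k))
        + ∑ j, (fderiv ℝ (d j) p.1 v.1 * p.2 j + d j p.1 * v.2 j) := by
  have hy : ∀ (j : Fin n), HasFDerivAt (fun q : TM n => q.2 j)
      ((ContinuousLinearMap.proj j).comp
        (ContinuousLinearMap.snd ℝ (Fin n → ℝ) (Fin n → ℝ))) p :=
    fun j => ((ContinuousLinearMap.proj j).comp
      (ContinuousLinearMap.snd ℝ (Fin n → ℝ) (Fin n → ℝ))).hasFDerivAt
  have hx : ∀ (g : (Fin n → ℝ) → ℝ), Differentiable ℝ g →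
      HasFDerivAt (fun q : TM n => g q.1)
        ((fderiv ℝ g p.1).comp (ContinuousLinearMap.fst ℝ (Fin n → ℝ) (Fin n → ℝ))) p :=
    fun g hg => ((hg p.1).hasFDerivAt).comp p (hasFDerivAt_fst)
  have H := (HasFDerivAt.fun_sum (u := Finset.univ)
      (fun (j : Fin n) _ => HasFDerivAt.fun_sum (u := Finset.univ)
        (fun (k : Fin n) _ => ((hx _ (hc j k)).fun_mul (hy j)).fun_mul (hy k)))).fun_add
    (HasFDerivAt.fun_sum (u := Finset.univ) (fun (j : Fin n) _ => (hx _ (hd j)).fun_mul (hy j)))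
  rw [H.fderiv]
  simp only [ContinuousLinearMap.add_apply, ContinuousLinearMap.sum_apply,
    ContinuousLinearMap.smul_apply, ContinuousLinearMap.comp_apply,
    ContinuousLinearMap.coe_fst', ContinuousLinearMap.coe_snd',
    ContinuousLinearMap.proj_apply, smul_eq_mul]
  congr 1
  · exact Finset.sum_congr rfl fun j _ => Finset.sum_congr rfl fun k _ => by ring
  · exact Finset.sum_congr rfl fun j _ => by ring

lemma pdx_quadlin {n : ℕ} (c : Fin n → Fin n → (Fin n → ℝ) → ℝ)
    (d : Fin n → (Fin n → ℝ) → ℝ)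
    (hc : ∀ j k, Differentiable ℝ (c j k)) (hd : ∀ j, Differentiable ℝ (d j))
    (p : TM n) (i : Fin n) :
    fderiv ℝ (fun q : TM n =>
        (∑ j, ∑ k, c j k q.1 * q.2 j * q.2 k) + ∑ j, d j q.1 * q.2 j) p
        (Pi.single i 1, 0)
      = (∑ j, ∑ k, pdb (c j k) i p.1 * p.2 j * p.2 k)
        + ∑ j, pdb (d j) i p.1 * p.2 j := by
  rw [fderiv_quadlin c d hc hd p (Pi.single i 1, 0)]
  simp [pdb]

lemma pdy_quadlin {n : ℕ} (c : Fin n → Fin n → (Fin n → ℝ) → ℝ)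
    (d : Fin n → (Fin n → ℝ) → ℝ)
    (hc : ∀ j k, Differentiable ℝ (c j k)) (hd : ∀ j, Differentiable ℝ (d j))
    (p : TM n) (m : Fin n) :
    fderiv ℝ (fun q : TM n =>
        (∑ j, ∑ k, c j k q.1 * q.2 j * q.2 k) + ∑ j, d j q.1 * q.2 j) p
        (0, Pi.single m 1)
      = ((∑ k, c m k p.1 * p.2 k) + ∑ j, c j m p.1 * p.2 j) + d m p.1 := by
  rw [fderiv_quadlin c d hc hd p (0, Pi.single m 1)]
  simp [Pi.single_apply, Finset.sum_add_distrib, mul_ite, ite_mul,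
    Finset.sum_ite_eq', Finset.sum_ite_irrel, Finset.sum_const_zero]

/-- for `L(x,y) = Σ a_ij(x) yⁱyʲ + Σ ∂φ/∂xʲ(x) yʲ`, with the canonical
nonlinear connection `N^j_i = ∂Gʲ/∂yⁱ` of the Riemannian part, the horizontal
derivative is `δL/δxⁱ = Σ_j (∂²φ/∂xⁱ∂xʲ − Σ_k γᵏ_ij ∂φ/∂xᵏ) yʲ`. -/
theorem horizontal_deriv_of_riemannian_plus_lift (n : ℕ)
    (a : (Fin n → ℝ) → Matrix (Fin n) (Fin n) ℝ)
    (ha : ∀ i j : Fin n, ContDiff ℝ ∞ (fun x => a x i j))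
    (hsymm : ∀ x : Fin n → ℝ, (a x).IsSymm) (hinv : ∀ x : Fin n → ℝ, IsUnit (a x))
    (φ : (Fin n → ℝ) → ℝ) (hφ : ContDiff ℝ ∞ φ)
    (L : TM n → ℝ)
    (hLdef : ∀ p : TM n,
      L p = (∑ i, ∑ j, a p.1 i j * p.2 i * p.2 j) + ∑ j, pdb φ j p.1 * p.2 j) :
    ∀ (p : TM n) (i : Fin n),
      pdx L i p - ∑ j, pdy (fun q => Gquad a j q) i p * pdy L j p
        = ∑ j, (pdb (pdb φ j) i p.1 - ∑ k, christoffel a k i j p.1 * pdb φ k p.1)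
            * p.2 j := by
  intro p i
  have hdiffa : ∀ j k : Fin n, Differentiable ℝ (fun x => a x j k) :=
    fun j k => (ha j k).differentiable (by simp)
  have hsa : ∀ (x : Fin n → ℝ) (j k : Fin n), a x j k = a x k j :=
    fun x j k => (hsymm x).apply k j
  have hdphi : ∀ j : Fin n, Differentiable ℝ (pdb φ j) :=
    fun j => (contDiff_pdb φ hφ j).differentiable (by simp)
  have hdpdba : ∀ (u v w : Fin n), Differentiable ℝ (pdb (fun z => a z u v) w) :=
    fun u v w => (contDiff_pdb _ (ha u v) w).differentiable (by simp)
  have hdchris : ∀ m s t : Fin n, Differentiable ℝ (christoffel a m s t) := by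
    intro m s t
    unfold christoffel
    refine Differentiable.const_mul (Differentiable.fun_sum fun l _ => Differentiable.mul ?_ ?_) _
    · exact diff_inv_entry a hdiffa hinv m l
    · exact ((hdpdba l s t).add (hdpdba l t s)).sub (hdpdba s t l)
  have hLfun : L = fun q : TM n =>
      (∑ j, ∑ k, a q.1 j k * q.2 j * q.2 k) + ∑ j, pdb φ j q.1 * q.2 j :=
    funext hLdef
  -- compute pdx L
  have hpdx : pdx L i p = (∑ j, ∑ k, pdb (fun z => a z j k) i p.1 * p.2 j * p.2 k)
      + ∑ j, pdb (pdb φ j) i p.1 * p.2 j := by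
    have h := pdx_quadlin (fun j k z => a z j k) (fun j => pdb φ j) hdiffa hdphi p i
    unfold pdx
    rw [hLfun]
    exact h
  -- compute pdy L
  have hpdyL : ∀ m : Fin n, pdy L m p =
      ((∑ k, a p.1 m k * p.2 k) + ∑ j, a p.1 j m * p.2 j) + pdb φ m p.1 := by
    intro m
    have h := pdy_quadlin (fun j k z => a z j k) (fun j => pdb φ j) hdiffa hdphi p m
    unfold pdy
    rw [hLfun]
    exact h
  -- symmetry of christoffel in the two lower indices
  have hχsym : ∀ (m s t : Fin n) (x : Fin n → ℝ),
      christoffel a m s t x = christoffel a m t s x := by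
    intro m s t x
    unfold christoffel
    congr 1
    refine Finset.sum_congr rfl fun l _ => ?_
    have efun : (fun z => a z s t) = (fun z => a z t s) := funext fun z => hsa z s t
    rw [efun]
    ring
  -- compute pdy of Gquad
  have hGfun : ∀ m : Fin n, (fun q : TM n => Gquad a m q) = fun q : TM n =>
      (∑ s, ∑ t, (1 / 2) * christoffel a m s t q.1 * q.2 s * q.2 t)
        + ∑ s, (0 : ℝ) * q.2 s := by
    intro m
    funext q
    simp [Gquad, Finset.mul_sum, mul_assoc]
  have hpdyG : ∀ m : Fin n, pdy (fun q => Gquad a m q) i p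
      = ∑ k, christoffel a m i k p.1 * p.2 k := by
    intro m
    have h := pdy_quadlin (fun s t z => (1 / 2) * christoffel a m s t z)
      (fun _ _ => (0 : ℝ)) (fun s t => (hdchris m s t).const_mul _)
      (fun _ => differentiable_const 0) p i
    unfold pdy
    rw [hGfun m, h, add_zero, ← Finset.sum_add_distrib]
    refine Finset.sum_congr rfl fun k _ => ?_
    rw [hχsym m k i p.1]
    ring
  -- the key inverse-metric identity
  have hTkey : ∀ m k : Fin n, (∑ j, a p.1 m j * christoffel a j i k p.1)
      = (1 / 2) * (pdb (fun z => a z m i) k p.1 + pdb (fun z => a z m k) i p.1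
          - pdb (fun z => a z i k) m p.1) := by
    intro m k
    have hstep1 : (∑ j, a p.1 m j * christoffel a j i k p.1)
        = ∑ j, ∑ l, a p.1 m j * (a p.1)⁻¹ j l *
            ((1 / 2) * (pdb (fun z => a z l i) k p.1 + pdb (fun z => a z l k) i p.1
              - pdb (fun z => a z i k) l p.1)) := by
      refine Finset.sum_congr rfl fun j _ => ?_
      simp only [christoffel]
      rw [Finset.mul_sum, Finset.mul_sum]
      exact Finset.sum_congr rfl fun l _ => by ring
    have hstep2 : (∑ j, ∑ l, a p.1 m j * (a p.1)⁻¹ j l *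
            ((1 / 2) * (pdb (fun z => a z l i) k p.1 + pdb (fun z => a z l k) i p.1
              - pdb (fun z => a z i k) l p.1)))
        = ∑ l, (∑ j, a p.1 m j * (a p.1)⁻¹ j l) *
            ((1 / 2) * (pdb (fun z => a z l i) k p.1 + pdb (fun z => a z l k) i p.1
              - pdb (fun z => a z i k) l p.1)) := by
      rw [Finset.sum_comm]
      refine Finset.sum_congr rfl fun l _ => ?_
      rw [Finset.sum_mul]
    have hdelta : ∀ l : Fin n, (∑ j, a p.1 m j * (a p.1)⁻¹ j l)
        = if m = l then (1 : ℝ) else 0 := by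
      intro l
      have h1 : a p.1 * (a p.1)⁻¹ = 1 :=
        Matrix.mul_nonsing_inv _ ((Matrix.isUnit_iff_isUnit_det _).mp (hinv p.1))
      calc (∑ j, a p.1 m j * (a p.1)⁻¹ j l) = (a p.1 * (a p.1)⁻¹) m l :=
            (Matrix.mul_apply).symm
        _ = (1 : Matrix (Fin n) (Fin n) ℝ) m l := by rw [h1]
        _ = if m = l then (1 : ℝ) else 0 := Matrix.one_apply
    rw [hstep1, hstep2]
    simp only [hdelta]
    simp [ite_mul, Finset.sum_ite_eq]
  set x := p.1
  set y := p.2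
  -- the quadratic part identity
  have hquad : (∑ j, (∑ k, christoffel a j i k x * y k) *
        ((∑ k, a x j k * y k) + ∑ m, a x m j * y m))
      = ∑ j, ∑ k, pdb (fun z => a z j k) i x * y j * y k := by
    have hPQ : ∀ j : Fin n, (∑ k, a x j k * y k) = ∑ m, a x m j * y m :=
      fun j => Finset.sum_congr rfl fun m _ => by rw [hsa x j m]
    have e1 : (∑ j, (∑ k, christoffel a j i k x * y k) *
          ((∑ k, a x j k * y k) + ∑ m, a x m j * y m))
        = ∑ j, ∑ k, ∑ m, a x m j * christoffel a j i k x * (2 * (y k * y m)) := by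
      refine Finset.sum_congr rfl fun j _ => ?_
      rw [hPQ j, ← two_mul, Finset.sum_mul]
      refine Finset.sum_congr rfl fun k _ => ?_
      rw [Finset.mul_sum, Finset.mul_sum]
      exact Finset.sum_congr rfl fun m _ => by ring
    have e2 : (∑ j, ∑ k, ∑ m, a x m j * christoffel a j i k x * (2 * (y k * y m)))
        = ∑ k, ∑ m, (∑ j, a x m j * christoffel a j i k x) * (2 * (y k * y m)) := by
      rw [Finset.sum_comm]
      refine Finset.sum_congr rfl fun k _ => ?_
      rw [Finset.sum_comm]
      exact Finset.sum_congr rfl fun m _ => (Finset.sum_mul _ _ _).symm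
    have e3 : (∑ k, ∑ m, (∑ j, a x m j * christoffel a j i k x) * (2 * (y k * y m)))
        = ∑ k, ∑ m, (pdb (fun z => a z m i) k x + pdb (fun z => a z m k) i x
            - pdb (fun z => a z i k) m x) * (y k * y m) := by
      refine Finset.sum_congr rfl fun k _ => Finset.sum_congr rfl fun m _ => ?_
      rw [hTkey m k]
      ring
    rw [e1, e2, e3]
    have esplit : (∑ k, ∑ m, (pdb (fun z => a z m i) k x + pdb (fun z => a z m k) i x
            - pdb (fun z => a z i k) m x) * (y k * y m))
        = ((∑ k, ∑ m, pdb (fun z => a z m i) k x * (y k * y m))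
            + ∑ k, ∑ m, pdb (fun z => a z m k) i x * (y k * y m))
          - ∑ k, ∑ m, pdb (fun z => a z i k) m x * (y k * y m) := by
      simp only [sub_mul, add_mul, Finset.sum_add_distrib, Finset.sum_sub_distrib]
    rw [esplit]
    have eS13 : (∑ k, ∑ m, pdb (fun z => a z m i) k x * (y k * y m))
        = ∑ k, ∑ m, pdb (fun z => a z i k) m x * (y k * y m) := by
      calc (∑ k, ∑ m, pdb (fun z => a z m i) k x * (y k * y m))
          = ∑ k, ∑ m, pdb (fun z => a z i m) k x * (y k * y m) := by
            refine Finset.sum_congr rfl fun k _ => Finset.sum_congr rfl fun m _ => ?_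
            have efun : (fun z => a z m i) = (fun z => a z i m) := funext fun z => hsa z m i
            rw [efun]
        _ = ∑ m, ∑ k, pdb (fun z => a z i m) k x * (y k * y m) := Finset.sum_comm
        _ = ∑ k, ∑ m, pdb (fun z => a z i k) m x * (y k * y m) := by
            refine Finset.sum_congr rfl fun k _ => Finset.sum_congr rfl fun m _ => by ring
    have eS2 : (∑ k, ∑ m, pdb (fun z => a z m k) i x * (y k * y m))
        = ∑ j, ∑ k, pdb (fun z => a z j k) i x * y j * y k := by
      calc (∑ k, ∑ m, pdb (fun z => a z m k) i x * (y k * y m))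
          = ∑ m, ∑ k, pdb (fun z => a z m k) i x * (y k * y m) := Finset.sum_comm
        _ = ∑ j, ∑ k, pdb (fun z => a z j k) i x * y j * y k := by
            refine Finset.sum_congr rfl fun j _ => Finset.sum_congr rfl fun k _ => by ring
    rw [eS13, eS2]
    ring
  -- the linear (φ) part identity
  have hlin : (∑ j, (∑ k, christoffel a j i k x * y k) * pdb φ j x)
      = ∑ j, (∑ k, christoffel a k i j x * pdb φ k x) * y j := by
    calc (∑ j, (∑ k, christoffel a j i k x * y k) * pdb φ j x)
        = ∑ j, ∑ k, christoffel a j i k x * y k * pdb φ j x :=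
          Finset.sum_congr rfl fun j _ => Finset.sum_mul _ _ _
      _ = ∑ k, ∑ j, christoffel a j i k x * y k * pdb φ j x := Finset.sum_comm
      _ = ∑ j, (∑ k, christoffel a k i j x * pdb φ k x) * y j := by
          refine Finset.sum_congr rfl fun j _ => ?_
          rw [Finset.sum_mul]
          exact Finset.sum_congr rfl fun k _ => by ring
  -- assemble
  rw [hpdx]
  have hsum : (∑ j, pdy (fun q => Gquad a j q) i p * pdy L j p)
      = (∑ j, (∑ k, christoffel a j i k x * y k) *
          ((∑ k, a x j k * y k) + ∑ m, a x m j * y m))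
        + ∑ j, (∑ k, christoffel a j i k x * y k) * pdb φ j x := by
    rw [← Finset.sum_add_distrib]
    refine Finset.sum_congr rfl fun j _ => ?_
    rw [hpdyG j, hpdyL j]
    ring
  rw [hsum, hquad, hlin]
  have hrhs : (∑ j, (pdb (pdb φ j) i x - ∑ k, christoffel a k i j x * pdb φ k x) * y j)
      = (∑ j, pdb (pdb φ j) i x * y j)
        - ∑ j, (∑ k, christoffel a k i j x * pdb φ k x) * y j := by
    rw [← Finset.sum_sub_distrib]
    exact Finset.sum_congr rfl fun j _ => by ring
  rw [hrhs]
  ring
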